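/- Let ρ: L^∞ → ℝ be a Lebesgue-continuous coherent risk measure (i.e., ρ(X_n) → ρ(X) whenever X_n is uniformly bounded and converges a.s. to X), and let ρ̃ = ρ|_{L^∞(𝓖)}. Then the set of restrictions 𝒮_ρ^𝓖 = {μ|_𝓖 : μ ∈ 𝒮_ρ} equals the supporting set 𝒮_{ρ̃} of ρ̃. -/

import Mathlib

open MeasureTheory

/-- Membership in the supporting set of ρ (densities of probability measures ≪ ℙ). -/
def SuppMem {Ω : Type*} {mΩ : MeasurableSpace Ω} (ℙ : Measure Ω) (ρ : (Ω → ℝ) → ℝ)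
    (D : Ω → ℝ) : Prop :=
  Measurable D ∧ (∀ᵐ ω ∂ℙ, 0 ≤ D ω) ∧ Integrable D ℙ ∧ (∫ ω, D ω ∂ℙ) = 1 ∧
    ∀ X : Ω → ℝ, Measurable X → (∃ C : ℝ, ∀ ω, |X ω| ≤ C) → (∫ ω, D ω * X ω ∂ℙ) ≤ ρ X

/-- Membership in the supporting set of ρ̃ = ρ|_{L^∞(𝓖)} (𝓖-measurable densities). -/
def SuppMemG {Ω : Type*} (m : MeasurableSpace Ω) {mΩ : MeasurableSpace Ω} (ℙ : Measure Ω)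
    (ρ : (Ω → ℝ) → ℝ) (E : Ω → ℝ) : Prop :=
  StronglyMeasurable[m] E ∧ (∀ᵐ ω ∂ℙ, 0 ≤ E ω) ∧ Integrable E ℙ ∧ (∫ ω, E ω ∂ℙ) = 1 ∧
    ∀ X : Ω → ℝ, StronglyMeasurable[m] X → (∃ C : ℝ, ∀ ω, |X ω| ≤ C) →
      (∫ ω, E ω * X ω ∂ℙ) ≤ ρ X

namespace Stmt7Aux

open Filter

variable {Ω : Type*}

/-- The space of bounded measurable functions, as a submodule of `Ω → ℝ`. -/
def BM (mΩ : MeasurableSpace Ω) : Submodule ℝ (Ω → ℝ) where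
  carrier := {f | Measurable f ∧ ∃ C : ℝ, ∀ ω, |f ω| ≤ C}
  add_mem' := by
    rintro f g ⟨hf, Cf, hCf⟩ ⟨hg, Cg, hCg⟩
    exact ⟨hf.add hg, Cf + Cg, fun ω => (abs_add_le _ _).trans (add_le_add (hCf ω) (hCg ω))⟩
  zero_mem' := ⟨measurable_const, 0, fun ω => by simp⟩
  smul_mem' := by
    rintro c f ⟨hf, Cf, hCf⟩
    refine ⟨hf.const_smul c, |c| * Cf, fun ω => ?_⟩
    have h : (c • f) ω = c * f ω := rfl
    rw [h, abs_mul]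
    exact mul_le_mul_of_nonneg_left (hCf ω) (abs_nonneg c)

theorem mem_BM {mΩ : MeasurableSpace Ω} {f : Ω → ℝ} :
    f ∈ BM mΩ ↔ Measurable f ∧ ∃ C : ℝ, ∀ ω, |f ω| ≤ C := Iff.rfl

/-- The indicator of a measurable set as an element of `BM`. -/
noncomputable def ind (mΩ : MeasurableSpace Ω) (A : Set Ω) (hA : MeasurableSet A) : BM mΩ :=
  ⟨A.indicator fun _ => (1:ℝ), measurable_const.indicator hA, 1, fun ω => by
    by_cases h : ω ∈ A <;> simp [Set.indicator_apply, h]⟩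

@[simp] theorem ind_val {mΩ : MeasurableSpace Ω} (A : Set Ω) (hA : MeasurableSet A) :
    ((ind mΩ A hA : BM mΩ) : Ω → ℝ) = A.indicator fun _ => (1:ℝ) := rfl

end Stmt7Aux

open Stmt7Aux Filter Topology

set_option maxHeartbeats 2000000 in
/-- for a Lebesgue-continuous coherent risk measure ρ, the set of restrictions
𝒮_ρ^𝓖 equals the supporting set of the restriction ρ̃ = ρ|_{L^∞(𝓖)}. -/
theorem stmt_7 {Ω : Type*} (m : MeasurableSpace Ω) {mΩ : MeasurableSpace Ω} (hm : m ≤ mΩ)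
    (ℙ : Measure Ω) [IsProbabilityMeasure ℙ] (ρ : (Ω → ℝ) → ℝ)
    (hcash : ∀ (X : Ω → ℝ) (c : ℝ), Measurable X → (∃ C : ℝ, ∀ ω, |X ω| ≤ C) →
      ρ (fun ω => X ω + c) = ρ X + c)
    (hmono : ∀ X Y : Ω → ℝ, Measurable X → (∃ C : ℝ, ∀ ω, |X ω| ≤ C) → Measurable Y →
      (∃ C : ℝ, ∀ ω, |Y ω| ≤ C) → (∀ᵐ ω ∂ℙ, X ω ≤ Y ω) → ρ X ≤ ρ Y)
    (hconv : ∀ X Y : Ω → ℝ, Measurable X → (∃ C : ℝ, ∀ ω, |X ω| ≤ C) → Measurable Y →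
      (∃ C : ℝ, ∀ ω, |Y ω| ≤ C) → ∀ lam : ℝ, 0 ≤ lam → lam ≤ 1 →
      ρ (fun ω => lam * X ω + (1 - lam) * Y ω) ≤ lam * ρ X + (1 - lam) * ρ Y)
    (hph : ∀ X : Ω → ℝ, Measurable X → (∃ C : ℝ, ∀ ω, |X ω| ≤ C) → ∀ lam : ℝ, 0 ≤ lam →
      ρ (fun ω => lam * X ω) = lam * ρ X)
    (hLeb : ∀ (Xs : ℕ → Ω → ℝ) (X : Ω → ℝ) (C : ℝ), (∀ n, Measurable (Xs n)) →
      (∀ n ω, |Xs n ω| ≤ C) → Measurable X → (∀ ω, |X ω| ≤ C) →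
      (∀ᵐ ω ∂ℙ, Filter.Tendsto (fun n => Xs n ω) Filter.atTop (nhds (X ω))) →
      Filter.Tendsto (fun n => ρ (Xs n)) Filter.atTop (nhds (ρ X))) :
    (∀ D : Ω → ℝ, SuppMem ℙ ρ D → SuppMemG m ℙ ρ (ℙ[D|m]))
    ∧ (∀ E : Ω → ℝ, SuppMemG m ℙ ρ E →
        ∃ D : Ω → ℝ, SuppMem ℙ ρ D ∧ (ℙ[D|m]) =ᵐ[ℙ] E) := by
  haveI : SigmaFinite (ℙ.trim hm) := by infer_instance
  -- basic consequences of coherence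
  have hρ0 : ρ (fun _ : Ω => (0:ℝ)) = 0 := by
    have h := hph (fun _ => (0:ℝ)) measurable_const ⟨0, fun ω => by simp⟩ 0 le_rfl
    simpa using h
  have hρconst : ∀ c : ℝ, ρ (fun _ => c) = c := by
    intro c
    have h := hcash (fun _ => (0:ℝ)) c measurable_const ⟨0, fun ω => by simp⟩
    simpa [hρ0] using h
  have hρle : ∀ (X : Ω → ℝ), Measurable X → ∀ C : ℝ, (∀ ω, X ω ≤ C) → ∀ C' : ℝ,
      (∀ ω, |X ω| ≤ C') → ρ X ≤ C := by
    intro X hX C hC C' hC'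
    have h := hmono X (fun _ => C) hX ⟨C', hC'⟩ measurable_const ⟨|C|, fun _ => le_rfl⟩
      (Filter.Eventually.of_forall hC)
    rwa [hρconst] at h
  have hsub : ∀ X Y : Ω → ℝ, Measurable X → (∃ C : ℝ, ∀ ω, |X ω| ≤ C) → Measurable Y →
      (∃ C : ℝ, ∀ ω, |Y ω| ≤ C) → ρ (fun ω => X ω + Y ω) ≤ ρ X + ρ Y := by
    intro X Y hX hbX hY hbY
    obtain ⟨CX, hCX⟩ := hbX
    obtain ⟨CY, hCY⟩ := hbY
    have hhalfmeas : Measurable fun ω => (1/2 : ℝ) * (X ω + Y ω) :=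
      ((hX.add hY).const_mul _)
    have hhalfbd : ∃ C : ℝ, ∀ ω, |(1/2 : ℝ) * (X ω + Y ω)| ≤ C := by
      refine ⟨(CX + CY) / 2, fun ω => ?_⟩
      rw [abs_mul]
      have := (abs_add_le (X ω) (Y ω)).trans (add_le_add (hCX ω) (hCY ω))
      calc |(1/2 : ℝ)| * |X ω + Y ω| ≤ (1/2 : ℝ) * (CX + CY) := by
            rw [abs_of_nonneg (by norm_num : (0:ℝ) ≤ 1/2)]
            exact mul_le_mul_of_nonneg_left this (by norm_num)
        _ = (CX + CY) / 2 := by ring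
    have h2 := hph (fun ω => (1/2 : ℝ) * (X ω + Y ω)) hhalfmeas hhalfbd 2 (by norm_num)
    have hXY : (fun ω => (2:ℝ) * ((1/2 : ℝ) * (X ω + Y ω))) = fun ω => X ω + Y ω := by
      funext ω; ring
    rw [hXY] at h2
    have hc := hconv X Y hX ⟨CX, hCX⟩ hY ⟨CY, hCY⟩ (1/2) (by norm_num) (by norm_num)
    have hid : (fun ω => (1/2 : ℝ) * X ω + (1 - 1/2) * Y ω)
        = fun ω => (1/2 : ℝ) * (X ω + Y ω) := by funext ω; ring
    rw [hid] at hc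
    rw [h2]
    linarith
  constructor
  · -- easy direction
    rintro D ⟨hDmeas, hDpos, hDint, hDone, hDle⟩
    refine ⟨stronglyMeasurable_condExp, condExp_nonneg hDpos, integrable_condExp, ?_, ?_⟩
    · rw [integral_condExp hm]; exact hDone
    · rintro X hXm ⟨C, hC⟩
      have hXmeas : Measurable X := (Measurable.mono hXm.measurable hm le_rfl)
      have hXD_int : Integrable (X * D) ℙ :=
        hDint.bdd_mul hXmeas.aestronglyMeasurable
          (Filter.Eventually.of_forall fun ω => by simpa [Real.norm_eq_abs] using hC ω)
      have hpull : ℙ[X * D|m] =ᵐ[ℙ] X * ℙ[D|m] :=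
        condExp_mul_of_stronglyMeasurable_left hXm hXD_int hDint
      have h1 : ∫ ω, (ℙ[D|m]) ω * X ω ∂ℙ = ∫ ω, D ω * X ω ∂ℙ := by
        calc ∫ ω, (ℙ[D|m]) ω * X ω ∂ℙ = ∫ ω, (X * ℙ[D|m]) ω ∂ℙ := by
              congr 1; funext ω; simp [mul_comm]
          _ = ∫ ω, (ℙ[X * D|m]) ω ∂ℙ := integral_congr_ae hpull.symm
          _ = ∫ ω, (X * D) ω ∂ℙ := integral_condExp hm
          _ = ∫ ω, D ω * X ω ∂ℙ := by congr 1; funext ω; simp [mul_comm]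
      rw [h1]
      exact hDle X hXmeas ⟨C, hC⟩
  · -- hard direction
    rintro E ⟨hEsm, hEpos, hEint, hEone, hEle⟩
    -- the subspace of m-measurable elements of BM
    set p : Submodule ℝ (BM mΩ) :=
      { carrier := {v | StronglyMeasurable[m] (v : Ω → ℝ)}
        add_mem' := fun ha hb => ha.add hb
        zero_mem' := stronglyMeasurable_const
        smul_mem' := fun c v hv => hv.const_smul c } with hp
    have hintE : ∀ v : Ω → ℝ, Measurable v → (∃ C : ℝ, ∀ ω, |v ω| ≤ C) →
        Integrable (fun ω => E ω * v ω) ℙ := by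
      rintro v hv ⟨C, hC⟩
      have h := hEint.bdd_mul hv.aestronglyMeasurable
        (Filter.Eventually.of_forall fun ω => by simpa [Real.norm_eq_abs] using hC ω)
      simpa [mul_comm] using h
    -- the linear functional v ↦ ∫ E v on the subspace p
    set φ : p →ₗ[ℝ] ℝ :=
      { toFun := fun x => ∫ ω, E ω * (x : Ω → ℝ) ω ∂ℙ
        map_add' := by
          rintro ⟨⟨a, hma, hba⟩, hpa⟩ ⟨⟨b, hmb, hbb⟩, hpb⟩
          have h : (fun ω => E ω * (a ω + b ω)) = fun ω => E ω * a ω + E ω * b ω := by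
            funext ω; ring
          show ∫ ω, E ω * (a ω + b ω) ∂ℙ = (∫ ω, E ω * a ω ∂ℙ) + ∫ ω, E ω * b ω ∂ℙ
          rw [h]
          exact integral_add (hintE a hma hba) (hintE b hmb hbb)
        map_smul' := by
          rintro c ⟨⟨a, hma, hba⟩, hpa⟩
          have h : (fun ω => E ω * (c * a ω)) = fun ω => c * (E ω * a ω) := by
            funext ω; ring
          show ∫ ω, E ω * (c * a ω) ∂ℙ = c * ∫ ω, E ω * a ω ∂ℙ
          rw [h]
          exact integral_const_mul c _ } with hφ
    have hφle : ∀ x : (LinearPMap.mk p φ : (BM mΩ) →ₗ.[ℝ] ℝ).domain,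
        (LinearPMap.mk p φ : (BM mΩ) →ₗ.[ℝ] ℝ) x ≤ ρ ((x : BM mΩ) : Ω → ℝ) := by
      rintro ⟨⟨a, hma, hba⟩, hpa⟩
      exact hEle a hpa hba
    obtain ⟨g, hg1, hg2⟩ := exists_extension_of_le_sublinear
      (LinearPMap.mk p φ) (fun v => ρ ((v : BM mΩ) : Ω → ℝ))
      (by
        intro c hc v
        have h := hph ((v : BM mΩ) : Ω → ℝ) v.2.1 v.2.2 c hc.le
        exact h)
      (by
        intro x y
        exact hsub _ _ x.2.1 x.2.2 y.2.1 y.2.2)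
      hφle
    -- basic facts about g
    have hg_le_zero : ∀ v : BM mΩ, (∀ᵐ ω ∂ℙ, (v : Ω → ℝ) ω ≤ 0) → g v ≤ 0 := by
      intro v hv
      refine (hg2 v).trans ?_
      have h := hmono (v : Ω → ℝ) (fun _ => 0) v.2.1 v.2.2 measurable_const
        ⟨0, fun ω => by simp⟩ hv
      rwa [hρ0] at h
    have hg_nonneg : ∀ v : BM mΩ, (∀ᵐ ω ∂ℙ, 0 ≤ (v : Ω → ℝ) ω) → 0 ≤ g v := by
      intro v hv
      have h := hg_le_zero (-v) (by
        filter_upwards [hv] with ω h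
        show -(v : Ω → ℝ) ω ≤ 0
        linarith)
      have h2 : g (-v) = - g v := map_neg g v
      linarith [h2 ▸ h]
    -- continuity of g along bounded a.s.-convergent sequences
    have hgcont : ∀ (Xs : ℕ → BM mΩ) (X : BM mΩ) (C : ℝ), 0 ≤ C →
        (∀ n ω, |((Xs n : BM mΩ) : Ω → ℝ) ω| ≤ C) → (∀ ω, |((X : BM mΩ) : Ω → ℝ) ω| ≤ C) →
        (∀ ω, Tendsto (fun n => ((Xs n : BM mΩ) : Ω → ℝ) ω) atTop (𝓝 (((X : BM mΩ) : Ω → ℝ) ω))) →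
        Tendsto (fun n => g (Xs n)) atTop (𝓝 (g X)) := by
      intro Xs X C hC0 hbXs hbX hconv'
      have hmeas : ∀ n, Measurable fun ω => ((X : BM mΩ) : Ω → ℝ) ω - ((Xs n : BM mΩ) : Ω → ℝ) ω :=
        fun n => X.2.1.sub (Xs n).2.1
      have hmeas' : ∀ n, Measurable fun ω => ((Xs n : BM mΩ) : Ω → ℝ) ω - ((X : BM mΩ) : Ω → ℝ) ω :=
        fun n => (Xs n).2.1.sub X.2.1
      have hbd : ∀ n ω, |((X : BM mΩ) : Ω → ℝ) ω - ((Xs n : BM mΩ) : Ω → ℝ) ω| ≤ C + C := by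
        intro n ω
        exact (abs_sub _ _).trans (add_le_add (hbX ω) (hbXs n ω))
      have hbd' : ∀ n ω, |((Xs n : BM mΩ) : Ω → ℝ) ω - ((X : BM mΩ) : Ω → ℝ) ω| ≤ C + C := by
        intro n ω
        exact (abs_sub _ _).trans (add_le_add (hbXs n ω) (hbX ω))
      have hptw : ∀ᵐ ω ∂ℙ, Tendsto
          (fun n => ((X : BM mΩ) : Ω → ℝ) ω - ((Xs n : BM mΩ) : Ω → ℝ) ω) atTop (𝓝 0) := by
        refine Filter.Eventually.of_forall fun ω => ?_
        have := Filter.Tendsto.sub (tendsto_const_nhds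
          (x := ((X : BM mΩ) : Ω → ℝ) ω) (f := atTop)) (hconv' ω)
        simpa using this
      have hptw' : ∀ᵐ ω ∂ℙ, Tendsto
          (fun n => ((Xs n : BM mΩ) : Ω → ℝ) ω - ((X : BM mΩ) : Ω → ℝ) ω) atTop (𝓝 0) := by
        refine Filter.Eventually.of_forall fun ω => ?_
        have := Filter.Tendsto.sub (hconv' ω) (tendsto_const_nhds
          (x := ((X : BM mΩ) : Ω → ℝ) ω) (f := atTop))
        simpa using this
      have t1 : Tendsto (fun n => ρ fun ω => ((X : BM mΩ) : Ω → ℝ) ω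
          - ((Xs n : BM mΩ) : Ω → ℝ) ω) atTop (𝓝 0) := by
        have h := hLeb (fun n ω => ((X : BM mΩ) : Ω → ℝ) ω - ((Xs n : BM mΩ) : Ω → ℝ) ω)
          (fun _ => 0) (C + C) hmeas hbd measurable_const
          (fun ω => by simpa using add_nonneg hC0 hC0) hptw
        rwa [hρ0] at h
      have t2 : Tendsto (fun n => ρ fun ω => ((Xs n : BM mΩ) : Ω → ℝ) ω
          - ((X : BM mΩ) : Ω → ℝ) ω) atTop (𝓝 0) := by
        have h := hLeb (fun n ω => ((Xs n : BM mΩ) : Ω → ℝ) ω - ((X : BM mΩ) : Ω → ℝ) ω)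
          (fun _ => 0) (C + C) hmeas' hbd' measurable_const
          (fun ω => by simpa using add_nonneg hC0 hC0) hptw'
        rwa [hρ0] at h
      have hcoe : ∀ a b : BM mΩ, ((a - b : BM mΩ) : Ω → ℝ) = fun ω => (a : Ω → ℝ) ω - (b : Ω → ℝ) ω := by
        intro a b; rfl
      have hub : ∀ n, g X - g (Xs n) ≤ ρ fun ω => ((X : BM mΩ) : Ω → ℝ) ω
          - ((Xs n : BM mΩ) : Ω → ℝ) ω := by
        intro n
        have := hg2 (X - Xs n)
        rw [map_sub, hcoe] at this
        exact this
      have hlb : ∀ n, -(ρ fun ω => ((Xs n : BM mΩ) : Ω → ℝ) ω - ((X : BM mΩ) : Ω → ℝ) ω)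
          ≤ g X - g (Xs n) := by
        intro n
        have := hg2 (Xs n - X)
        rw [map_sub, hcoe] at this
        linarith
      have hsq : Tendsto (fun n => g X - g (Xs n)) atTop (𝓝 0) := by
        have hneg : Tendsto (fun n => -(ρ fun ω => ((Xs n : BM mΩ) : Ω → ℝ) ω
            - ((X : BM mΩ) : Ω → ℝ) ω)) atTop (𝓝 0) := by
          simpa using t2.neg
        exact tendsto_of_tendsto_of_tendsto_of_le_of_le hneg t1 hlb hub
      have := (tendsto_const_nhds (x := g X) (f := atTop)).sub hsq
      simpa using this
    -- the measure μ given by A ↦ g(1_A)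
    have hind_nonneg : ∀ (A : Set Ω) (hA : MeasurableSet A), 0 ≤ g (ind mΩ A hA) := by
      intro A hA
      refine hg_nonneg _ (Filter.Eventually.of_forall fun ω => ?_)
      rw [ind_val]
      exact Set.indicator_nonneg (fun _ _ => zero_le_one) ω
    have hind_le_one : ∀ (A : Set Ω) (hA : MeasurableSet A), g (ind mΩ A hA) ≤ 1 := by
      intro A hA
      refine (hg2 _).trans ?_
      refine hρle _ (ind mΩ A hA).2.1 1 (fun ω => ?_) 1 (fun ω => ?_)
      · rw [ind_val]
        by_cases h : ω ∈ A
        · rw [Set.indicator_of_mem h]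
        · rw [Set.indicator_of_notMem h]; norm_num
      · rw [ind_val]
        by_cases h : ω ∈ A
        · rw [Set.indicator_of_mem h]; norm_num
        · rw [Set.indicator_of_notMem h]; norm_num
    have hm0 : ENNReal.ofReal (g (ind mΩ ∅ MeasurableSet.empty)) = 0 := by
      have h : ind mΩ ∅ MeasurableSet.empty = 0 := Subtype.ext (by
        show Set.indicator ∅ (fun _ => (1:ℝ)) = 0
        funext ω; simp)
      rw [h, map_zero, ENNReal.ofReal_zero]
    have hmU : ∀ ⦃f : ℕ → Set Ω⦄ (h : ∀ i, MeasurableSet (f i)), Pairwise (Function.onFun Disjoint f) →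
        ENNReal.ofReal (g (ind mΩ (⋃ i, f i) (MeasurableSet.iUnion h)))
          = ∑' i, ENNReal.ofReal (g (ind mΩ (f i) (h i))) := by
      intro f h hdisj
      set a : ℕ → ℝ := fun i => g (ind mΩ (f i) (h i)) with ha
      have hanonneg : ∀ i, 0 ≤ a i := fun i => hind_nonneg _ _
      have hInmeas : ∀ n : ℕ, MeasurableSet (⋃ i ∈ Finset.range n, f i) :=
        fun n => (Finset.range n).measurableSet_biUnion (fun i _ => h i)
      have hindsum : ∀ n : ℕ, (Set.indicator (⋃ i ∈ Finset.range n, f i) fun _ => (1:ℝ))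
          = ∑ i ∈ Finset.range n, Set.indicator (f i) fun _ => (1:ℝ) := by
        intro n
        induction n with
        | zero => funext ω; simp
        | succ n ih =>
          rw [Finset.range_add_one, Finset.sum_insert (by simp), ← ih]
          have hU : (⋃ i ∈ insert n (Finset.range n), f i)
              = f n ∪ ⋃ i ∈ Finset.range n, f i := by
            simp [Set.biUnion_insert]
          have hdisj2 : Disjoint (f n) (⋃ i ∈ Finset.range n, f i) :=
            Set.disjoint_iUnion_right.2 fun i => Set.disjoint_iUnion_right.2 fun hi =>
              hdisj (by rintro rfl; simp at hi)
          rw [hU, Set.indicator_union_of_disjoint hdisj2]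
          rfl
      have hpartial : ∀ n : ℕ, ∑ i ∈ Finset.range n, a i
          = g (ind mΩ (⋃ i ∈ Finset.range n, f i) (hInmeas n)) := by
        intro n
        have hsum : (ind mΩ (⋃ i ∈ Finset.range n, f i) (hInmeas n))
            = ∑ i ∈ Finset.range n, ind mΩ (f i) (h i) := by
          apply Subtype.ext
          rw [ind_val, hindsum n]
          simp
        rw [hsum, map_sum]
      have hsummable : Summable a := by
        refine summable_of_sum_range_le (c := 1) hanonneg fun n => ?_
        rw [hpartial n]
        exact hind_le_one _ _
      have htendsto : Tendsto (fun n => ∑ i ∈ Finset.range n, a i) atTop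
          (𝓝 (g (ind mΩ (⋃ i, f i) (MeasurableSet.iUnion h)))) := by
        have hgt := hgcont (fun n => ind mΩ (⋃ i ∈ Finset.range n, f i) (hInmeas n))
          (ind mΩ (⋃ i, f i) (MeasurableSet.iUnion h)) 1 zero_le_one
          (fun n ω => by
            rw [ind_val]
            by_cases hω : ω ∈ ⋃ i ∈ Finset.range n, f i
            · rw [Set.indicator_of_mem hω]; norm_num
            · rw [Set.indicator_of_notMem hω]; norm_num)
          (fun ω => by
            rw [ind_val]
            by_cases hω : ω ∈ ⋃ i, f i
            · rw [Set.indicator_of_mem hω]; norm_num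
            · rw [Set.indicator_of_notMem hω]; norm_num)
          (fun ω => ?_)
        · exact hgt.congr fun n => (hpartial n).symm
        · rw [ind_val]
          by_cases hω : ω ∈ ⋃ i, f i
          · obtain ⟨i₀, hi₀⟩ := Set.mem_iUnion.1 hω
            have hev : ∀ n, n ≥ i₀ + 1 → (Set.indicator (⋃ i ∈ Finset.range n, f i)
                (fun _ => (1:ℝ))) ω = (Set.indicator (⋃ i, f i) (fun _ => (1:ℝ))) ω := by
              intro n hn
              have hmem : ω ∈ ⋃ i ∈ Finset.range n, f i :=
                Set.mem_biUnion (Finset.mem_range.2 (Nat.lt_of_succ_le hn)) hi₀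
              rw [Set.indicator_of_mem hmem, Set.indicator_of_mem hω]
            refine Tendsto.congr' ?_ (tendsto_const_nhds
              (x := (Set.indicator (⋃ i, f i) (fun _ => (1:ℝ))) ω))
            filter_upwards [Filter.eventually_ge_atTop (i₀ + 1)] with n hn
            rw [ind_val]
            exact (hev n hn).symm
          · have hnot : ∀ n, ω ∉ ⋃ i ∈ Finset.range n, f i := by
              intro n hc
              obtain ⟨i, _, hi⟩ := Set.mem_iUnion₂.1 hc
              exact hω (Set.mem_iUnion.2 ⟨i, hi⟩)
            have h0 : ∀ n, ((ind mΩ (⋃ i ∈ Finset.range n, f i) (hInmeas n) : BM mΩ) : Ω → ℝ) ω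
                = 0 := fun n => by rw [ind_val]; exact Set.indicator_of_notMem (hnot n) _
            have hl : (Set.indicator (⋃ i, f i) fun _ => (1:ℝ)) ω = 0 :=
              Set.indicator_of_notMem hω _
            show Tendsto (fun n =>
              ((ind mΩ (⋃ i ∈ Finset.range n, f i) (hInmeas n) : BM mΩ) : Ω → ℝ) ω) atTop
              (𝓝 ((Set.indicator (⋃ i, f i) fun _ => (1:ℝ)) ω))
            rw [hl]
            exact Tendsto.congr (fun n => (h0 n).symm) tendsto_const_nhds
      have hhs : HasSum a (g (ind mΩ (⋃ i, f i) (MeasurableSet.iUnion h))) :=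
        (hasSum_iff_tendsto_nat_of_nonneg hanonneg _).2 htendsto
      rw [← hhs.tsum_eq, ← ENNReal.ofReal_tsum_of_nonneg hanonneg hsummable]
    set μ : Measure Ω := Measure.ofMeasurable
      (fun A hA => ENNReal.ofReal (g (ind mΩ A hA))) hm0 hmU with hμ
    have hμval : ∀ (A : Set Ω) (hA : MeasurableSet A),
        μ A = ENNReal.ofReal (g (ind mΩ A hA)) :=
      fun A hA => Measure.ofMeasurable_apply A hA
    haveI hμfin : IsFiniteMeasure μ := ⟨by
      rw [hμval Set.univ MeasurableSet.univ]; exact ENNReal.ofReal_lt_top⟩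
    have hμac : μ ≪ ℙ := by
      refine Measure.AbsolutelyContinuous.mk fun A hA hA0 => ?_
      rw [hμval A hA]
      have h1 : g (ind mΩ A hA) ≤ 0 := by
        refine hg_le_zero _ ?_
        have : ∀ᵐ ω ∂ℙ, ω ∉ A := (MeasureTheory.measure_eq_zero_iff_ae_notMem).1 hA0
        filter_upwards [this] with ω hω
        rw [ind_val]
        simp [Set.indicator_of_notMem hω]
      simpa [ENNReal.ofReal_eq_zero] using h1
    -- the density D of μ with respect to ℙ
    set D : Ω → ℝ := fun ω => (μ.rnDeriv ℙ ω).toReal with hD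
    have hDmeas : Measurable D := (Measure.measurable_rnDeriv μ ℙ).ennreal_toReal
    have hDnn : ∀ ω, 0 ≤ D ω := fun ω => ENNReal.toReal_nonneg
    have hDint : Integrable D ℙ := Measure.integrable_toReal_rnDeriv
    have hμset : ∀ s : Set Ω, ∫ x in s, D x ∂ℙ = (μ s).toReal :=
      fun s => Measure.setIntegral_toReal_rnDeriv hμac s
    -- value of g on m-measurable indicators
    have hval_m : ∀ (s : Set Ω) (hs : MeasurableSet[m] s),
        g (ind mΩ s (hm s hs)) = ∫ x in s, E x ∂ℙ := by
      intro s hs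
      have hmem : ind mΩ s (hm s hs) ∈ p := by
        show StronglyMeasurable[m] ((ind mΩ s (hm s hs) : BM mΩ) : Ω → ℝ)
        rw [ind_val]
        exact stronglyMeasurable_const.indicator hs
      have h := hg1 ⟨ind mΩ s (hm s hs), hmem⟩
      rw [h]
      show ∫ ω, E ω * ((ind mΩ s (hm s hs) : BM mΩ) : Ω → ℝ) ω ∂ℙ = ∫ x in s, E x ∂ℙ
      rw [← integral_indicator (hm s hs)]
      congr 1
      funext ω
      by_cases hω : ω ∈ s <;> simp [ind_val, Set.indicator_apply, hω]
    have hDtot : ∫ ω, D ω ∂ℙ = 1 := by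
      have h := hμset Set.univ
      rw [setIntegral_univ] at h
      rw [h, hμval Set.univ MeasurableSet.univ,
        ENNReal.toReal_ofReal (hind_nonneg _ _)]
      have := hval_m Set.univ MeasurableSet.univ
      rw [setIntegral_univ] at this
      rw [this, hEone]
    -- integrability of BM elements w.r.t. μ
    have hintμ : ∀ v : BM mΩ, Integrable ((v : BM mΩ) : Ω → ℝ) μ := by
      intro v
      obtain ⟨hvm, C, hC⟩ := v.2
      exact ⟨hvm.aestronglyMeasurable, HasFiniteIntegral.of_bounded
        (Filter.Eventually.of_forall fun ω => by simpa [Real.norm_eq_abs] using hC ω)⟩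
    -- ∫ v dμ = g v for indicators
    have hgind : ∀ (A : Set Ω) (hA : MeasurableSet A), (μ A).toReal = g (ind mΩ A hA) := by
      intro A hA
      rw [hμval A hA, ENNReal.toReal_ofReal (hind_nonneg A hA)]
    -- ∫ v dμ = g v for simple functions
    have hSimple : ∀ (s : SimpleFunc Ω ℝ) (hs : (⇑s : Ω → ℝ) ∈ BM mΩ),
        ∫ ω, s ω ∂μ = g ⟨⇑s, hs⟩ := by
      intro s
      induction s using SimpleFunc.induction with
      | const c hs =>
        intro hmem
        rename_i A
        have hcoe : (⇑(SimpleFunc.piecewise A hs (SimpleFunc.const Ω c)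
            (SimpleFunc.const Ω 0)) : Ω → ℝ) = Set.indicator A fun _ => c := by
          funext ω
          by_cases hω : ω ∈ A <;>
            simp [SimpleFunc.piecewise_apply, Set.indicator_apply, hω]
        have hEq : (⟨⇑(SimpleFunc.piecewise A hs (SimpleFunc.const Ω c)
            (SimpleFunc.const Ω 0)), hmem⟩ : BM mΩ) = c • ind mΩ A hs := by
          apply Subtype.ext
          show (⇑(SimpleFunc.piecewise A hs (SimpleFunc.const Ω c)
            (SimpleFunc.const Ω 0)) : Ω → ℝ) = ((c • ind mΩ A hs : BM mΩ) : Ω → ℝ)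
          rw [hcoe]
          funext ω
          show Set.indicator A (fun _ => c) ω = c • Set.indicator A (fun _ => (1:ℝ)) ω
          by_cases hω : ω ∈ A
          · rw [Set.indicator_of_mem hω, Set.indicator_of_mem hω, smul_eq_mul, mul_one]
          · rw [Set.indicator_of_notMem hω, Set.indicator_of_notMem hω, smul_eq_mul, mul_zero]
        rw [hEq, _root_.map_smul, smul_eq_mul, ← hgind A hs, hcoe,
          integral_indicator_const c hs, smul_eq_mul]
        exact mul_comm _ _
      | add hdisj ih₁ ih₂ =>
        intro hmem
        rename_i f₁ f₂
        have hm₁ : (⇑f₁ : Ω → ℝ) ∈ BM mΩ := by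
          obtain ⟨C, hC⟩ := f₁.exists_forall_norm_le
          exact ⟨f₁.measurable, C, fun ω => by simpa [Real.norm_eq_abs] using hC ω⟩
        have hm₂ : (⇑f₂ : Ω → ℝ) ∈ BM mΩ := by
          obtain ⟨C, hC⟩ := f₂.exists_forall_norm_le
          exact ⟨f₂.measurable, C, fun ω => by simpa [Real.norm_eq_abs] using hC ω⟩
        have hEq : (⟨⇑(f₁ + f₂), hmem⟩ : BM mΩ) = (⟨⇑f₁, hm₁⟩ : BM mΩ) + ⟨⇑f₂, hm₂⟩ := by
          apply Subtype.ext
          show (⇑(f₁ + f₂) : Ω → ℝ) = ⇑f₁ + ⇑f₂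
          exact SimpleFunc.coe_add f₁ f₂
        rw [hEq, map_add, ← ih₁ hm₁, ← ih₂ hm₂, SimpleFunc.coe_add]
        exact integral_add (hintμ ⟨⇑f₁, hm₁⟩) (hintμ ⟨⇑f₂, hm₂⟩)
    -- ∫ v dμ = g v in general
    have hInt : ∀ v : BM mΩ, ∫ ω, ((v : BM mΩ) : Ω → ℝ) ω ∂μ = g v := by
      intro v
      obtain ⟨hvm, C, hC⟩ := v.2
      set Xs : ℕ → SimpleFunc Ω ℝ :=
        fun n => SimpleFunc.approxOn ((v : BM mΩ) : Ω → ℝ) hvm Set.univ 0 (Set.mem_univ 0) n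
        with hXs
      have hbXs : ∀ n ω, |Xs n ω| ≤ |C| + |C| := by
        intro n ω
        have h := SimpleFunc.norm_approxOn_zero_le hvm (Set.mem_univ 0) ω n
        rw [Real.norm_eq_abs, Real.norm_eq_abs] at h
        exact h.trans (add_le_add ((hC ω).trans (le_abs_self C))
          ((hC ω).trans (le_abs_self C)))
      have hmemXs : ∀ n, (⇑(Xs n) : Ω → ℝ) ∈ BM mΩ :=
        fun n => ⟨(Xs n).measurable, |C| + |C|, hbXs n⟩
      have hptw : ∀ ω, Tendsto (fun n => Xs n ω) atTop (𝓝 (((v : BM mΩ) : Ω → ℝ) ω)) :=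
        fun ω => SimpleFunc.tendsto_approxOn hvm (Set.mem_univ 0) (by simp)
      have hgt : Tendsto (fun n => g ⟨⇑(Xs n), hmemXs n⟩) atTop (𝓝 (g v)) := by
        refine hgcont (fun n => ⟨⇑(Xs n), hmemXs n⟩) v (|C| + |C|)
          (add_nonneg (abs_nonneg C) (abs_nonneg C)) (fun n ω => hbXs n ω)
          (fun ω => (hC ω).trans ((le_abs_self C).trans (le_add_of_nonneg_right
            (abs_nonneg C)))) (fun ω => hptw ω)
      have hμt : Tendsto (fun n => ∫ ω, Xs n ω ∂μ) atTop
          (𝓝 (∫ ω, ((v : BM mΩ) : Ω → ℝ) ω ∂μ)) := by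
        refine tendsto_integral_of_dominated_convergence (fun _ => |C| + |C|)
          (fun n => (Xs n).measurable.aestronglyMeasurable) (integrable_const _)
          (fun n => Filter.Eventually.of_forall fun ω => by
            simpa [Real.norm_eq_abs] using hbXs n ω)
          (Filter.Eventually.of_forall fun ω => hptw ω)
      have heq : ∀ n, ∫ ω, Xs n ω ∂μ = g ⟨⇑(Xs n), hmemXs n⟩ :=
        fun n => hSimple (Xs n) (hmemXs n)
      have hμt' : Tendsto (fun n => g ⟨⇑(Xs n), hmemXs n⟩) atTop
          (𝓝 (∫ ω, ((v : BM mΩ) : Ω → ℝ) ω ∂μ)) := by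
        refine hμt.congr fun n => heq n
      exact tendsto_nhds_unique hμt' hgt
    -- the key inequality
    have hfinal : ∀ X : Ω → ℝ, Measurable X → (∃ C : ℝ, ∀ ω, |X ω| ≤ C) →
        (∫ ω, D ω * X ω ∂ℙ) ≤ ρ X := by
      rintro X hX ⟨C, hC⟩
      have h1 : ∫ ω, D ω * X ω ∂ℙ = ∫ ω, X ω ∂μ := by
        have h := MeasureTheory.integral_rnDeriv_smul hμac (f := X)
        simpa [hD, smul_eq_mul] using h
      rw [h1]
      have h2 := hInt ⟨X, hX, C, hC⟩
      rw [show (((⟨X, hX, C, hC⟩ : BM mΩ) : BM mΩ) : Ω → ℝ) = X from rfl] at h2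
      rw [h2]
      exact hg2 ⟨X, hX, C, hC⟩
    -- D has conditional expectation E
    have hsetEq : ∀ s : Set Ω, MeasurableSet[m] s → ℙ s < ⊤ →
        ∫ x in s, E x ∂ℙ = ∫ x in s, D x ∂ℙ := by
      intro s hs _
      rw [hμset s, hgind s (hm s hs), hval_m s hs]
    have hEae : E =ᵐ[ℙ] ℙ[D|m] :=
      ae_eq_condExp_of_forall_setIntegral_eq hm hDint
        (fun s _ _ => hEint.integrableOn) hsetEq (StronglyMeasurable.aestronglyMeasurable hEsm)
    exact ⟨D, ⟨hDmeas, Filter.Eventually.of_forall hDnn, hDint, hDtot, hfinal⟩, hEae.symm⟩
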